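/- Let v ∈ C¹(B_{R'} \ {0}; R) vanish outside B_{R'} in R², and let 0 < L < R'. Then ∫_{B_{R'}\B_L} |v(r)|/r² dr ≤ C log^{3/2}(R'/L) ‖∇v‖_{L²(R²)}, where C is independent of L, R', v. -/

import Mathlib

open MeasureTheory
open Real Set intervalIntegral

variable {α : Type*} [MeasurableSpace α]

lemma cs_gen (μ : Measure α) {f g : α → ℝ}
    (hf0 : 0 ≤ᵐ[μ] f) (hg0 : 0 ≤ᵐ[μ] g)
    (hfm : AEStronglyMeasurable f μ) (hgm : AEStronglyMeasurable g μ)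
    (hf2 : Integrable (fun a => f a ^ 2) μ) (hg2 : Integrable (fun a => g a ^ 2) μ) :
    ∫ a, f a * g a ∂μ ≤ Real.sqrt (∫ a, f a ^ 2 ∂μ) * Real.sqrt (∫ a, g a ^ 2 ∂μ) := by
  have hpq : Real.HolderConjugate 2 2 := Real.HolderConjugate.two_two
  have hMf : MemLp f (ENNReal.ofReal 2) μ := by
    rw [show ENNReal.ofReal 2 = 2 by norm_num]
    exact (memLp_two_iff_integrable_sq hfm).2 hf2
  have hMg : MemLp g (ENNReal.ofReal 2) μ := by
    rw [show ENNReal.ofReal 2 = 2 by norm_num]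
    exact (memLp_two_iff_integrable_sq hgm).2 hg2
  have h := integral_mul_le_Lp_mul_Lq_of_nonneg hpq hf0 hg0 hMf hMg
  have e1 : ∫ a, f a ^ (2:ℝ) ∂μ = ∫ a, f a ^ 2 ∂μ := by
    apply MeasureTheory.integral_congr_ae; filter_upwards [hf0] with a ha
    rw [show f a ^ (2:ℝ) = f a ^ ((2:ℕ):ℝ) by norm_num, Real.rpow_natCast]
  have e2 : ∫ a, g a ^ (2:ℝ) ∂μ = ∫ a, g a ^ 2 ∂μ := by
    apply MeasureTheory.integral_congr_ae; filter_upwards [hg0] with a ha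
    rw [show g a ^ (2:ℝ) = g a ^ ((2:ℕ):ℝ) by norm_num, Real.rpow_natCast]
  rw [e1, e2] at h
  calc ∫ a, f a * g a ∂μ ≤ (∫ a, f a ^ 2 ∂μ) ^ ((1:ℝ)/2) * (∫ a, g a ^ 2 ∂μ) ^ ((1:ℝ)/2) := h
    _ = _ := by rw [← Real.sqrt_eq_rpow, ← Real.sqrt_eq_rpow]

lemma interval_cs {a b : ℝ} (ha : 0 < a) (hab : a ≤ b) {g : ℝ → ℝ}
    (hgc : ContinuousOn g (Icc a b)) (hg0 : ∀ s ∈ Icc a b, 0 ≤ g s) :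
    ∫ s in a..b, g s ≤ Real.sqrt (∫ s in a..b, g s ^ 2 * s) * Real.sqrt (Real.log (b / a)) := by
  have hpos : ∀ s ∈ Icc a b, 0 < s := fun s hs => lt_of_lt_of_le ha hs.1
  set μ := volume.restrict (Ioc a b) with hμ
  set f1 : ℝ → ℝ := fun s => g s * Real.sqrt s with hf1
  set f2 : ℝ → ℝ := fun s => (Real.sqrt s)⁻¹ with hf2
  have hIoc : Ioc a b ⊆ Icc a b := Ioc_subset_Icc_self
  have hsm : MeasurableSet (Ioc a b) := measurableSet_Ioc
  have hf1c : ContinuousOn f1 (Icc a b) := hgc.mul (Real.continuous_sqrt.continuousOn)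
  have hf2c : ContinuousOn f2 (Icc a b) := by
    apply ContinuousOn.inv₀ (Real.continuous_sqrt.continuousOn)
    exact fun s hs => Real.sqrt_ne_zero'.2 (hpos s hs)
  have key := cs_gen μ (f := f1) (g := f2)
    ((ae_restrict_iff' hsm).2 (Filter.Eventually.of_forall fun s hs =>
      mul_nonneg (hg0 s (hIoc hs)) (Real.sqrt_nonneg s)))
    ((ae_restrict_iff' hsm).2 (Filter.Eventually.of_forall fun s hs =>
      inv_nonneg.2 (Real.sqrt_nonneg s)))
    ((hf1c.mono hIoc).aestronglyMeasurable hsm)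
    ((hf2c.mono hIoc).aestronglyMeasurable hsm)
    (((hf1c.pow 2).integrableOn_Icc).mono_set hIoc)
    (((hf2c.pow 2).integrableOn_Icc).mono_set hIoc)
  have eL : ∫ s, f1 s * f2 s ∂μ = ∫ s in a..b, g s := by
    rw [integral_of_le hab]
    apply setIntegral_congr_fun hsm
    intro s hs
    have h1 : Real.sqrt s ≠ 0 := Real.sqrt_ne_zero'.2 (hpos s (hIoc hs))
    exact mul_inv_cancel_right₀ h1 (g s)
  have e1 : ∫ s, f1 s ^ 2 ∂μ = ∫ s in a..b, g s ^ 2 * s := by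
    rw [integral_of_le hab]
    apply setIntegral_congr_fun hsm
    intro s hs
    simp only [f1, mul_pow, Real.sq_sqrt (hpos s (hIoc hs)).le]
  have e2 : ∫ s, f2 s ^ 2 ∂μ = Real.log (b / a) := by
    have : ∫ s, f2 s ^ 2 ∂μ = ∫ s in a..b, s⁻¹ := by
      rw [integral_of_le hab]
      apply setIntegral_congr_fun hsm
      intro s hs
      simp only [f2, inv_pow, Real.sq_sqrt (hpos s (hIoc hs)).le]
    rw [this, integral_inv]
    rw [uIcc_of_le hab]
    intro h
    exact absurd (hpos 0 h) (lt_irrefl 0)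
  rw [eL, e1, e2] at key
  exact key

lemma log_int {L R' : ℝ} (hL : 0 < L) (hLR : L < R') :
    ∫ r in L..R', Real.sqrt (Real.log (R' / r)) / r
      = 2/3 * (Real.sqrt (Real.log (R' / L)) * Real.log (R' / L)) := by
  have hR' : 0 < R' := hL.trans hLR
  set φ : ℝ → ℝ := fun r => -(2/3) * (Real.sqrt (Real.log (R' / r)) * Real.log (R' / r)) with hφ
  have hlogc : ContinuousOn (fun r => Real.log (R' / r)) (Icc L R') := by
    apply ContinuousOn.log
    · exact continuousOn_const.div continuousOn_id fun x hx => (hL.trans_le hx.1).ne'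
    · exact fun x hx => (div_pos hR' (hL.trans_le hx.1)).ne'
  have hcont : ContinuousOn φ (Icc L R') :=
    continuousOn_const.mul ((Real.continuous_sqrt.comp_continuousOn hlogc).mul hlogc)
  have hint : IntervalIntegrable (fun r => Real.sqrt (Real.log (R' / r)) / r) volume L R' := by
    apply ContinuousOn.intervalIntegrable
    rw [uIcc_of_le hLR.le]
    exact (Real.continuous_sqrt.comp_continuousOn hlogc).div continuousOn_id
      fun x hx => (hL.trans_le hx.1).ne'
  have hderiv : ∀ r ∈ Ioo L R',
      HasDerivWithinAt φ (Real.sqrt (Real.log (R' / r)) / r) (Ioi r) r := by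
    intro r hr
    have hr0 : 0 < r := hL.trans hr.1
    have hy : 0 < Real.log (R' / r) := Real.log_pos ((one_lt_div hr0).2 hr.2)
    -- u has derivative -1/r at r
    have hu : HasDerivAt (fun s => Real.log (R' / s)) (-r⁻¹) r := by
      have h1 : HasDerivAt (fun s => Real.log R' - Real.log s) (-r⁻¹) r := by
        simpa using (Real.hasDerivAt_log hr0.ne').const_sub (Real.log R')
      apply h1.congr_of_eventuallyEq
      filter_upwards [eventually_gt_nhds hr0] with s hs
      rw [Real.log_div hR'.ne' hs.ne']
    -- h has derivative -sqrt y at y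
    set y := Real.log (R' / r) with hyd
    have hh : HasDerivAt (fun t => -(2/3) * (Real.sqrt t * t)) (-Real.sqrt y) y := by
      have h2 : HasDerivAt (fun t => Real.sqrt t * t) (1/(2 * Real.sqrt y) * y + Real.sqrt y * 1) y :=
        (Real.hasDerivAt_sqrt hy.ne').mul (hasDerivAt_id y)
      have h3 := h2.const_mul (-(2/3) : ℝ)
      refine h3.congr_deriv ?_
      have hsy : Real.sqrt y ≠ 0 := Real.sqrt_ne_zero'.2 hy
      have hyy : Real.sqrt y * Real.sqrt y = y := Real.mul_self_sqrt hy.le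
      field_simp
      nlinarith [hyy]
    have := (hh.comp r hu)
    have heq : -Real.sqrt y * -r⁻¹ = Real.sqrt (Real.log (R' / r)) / r := by
      rw [hyd]; field_simp
    rw [heq] at this
    exact this.hasDerivWithinAt
  have := integral_eq_sub_of_hasDeriv_right_of_le hLR.le hcont hderiv hint
  rw [this]
  have : R' / R' = 1 := div_self hR'.ne'
  simp only [φ, this, Real.log_one, Real.sqrt_zero, mul_zero, zero_mul, neg_mul, zero_sub,
    neg_neg]
  ring


noncomputable def sigma2 : EuclideanSpace ℝ (Fin 2) ≃ᵐ ℝ × ℝ :=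
  (MeasurableEquiv.toLp 2 (Fin 2 → ℝ)).symm.trans (MeasurableEquiv.finTwoArrow)

noncomputable def eθ (θ : ℝ) : EuclideanSpace ℝ (Fin 2) := sigma2.symm (Real.cos θ, Real.sin θ)

lemma sigma2_symm_apply (p : ℝ × ℝ) (i : Fin 2) : sigma2.symm p i = ![p.1, p.2] i := rfl

lemma norm_eθ (θ : ℝ) : ‖eθ θ‖ = 1 := by
  rw [EuclideanSpace.norm_eq]
  simp only [eθ, sigma2_symm_apply, Fin.sum_univ_two]
  norm_num [Real.norm_eq_abs, sq_abs]

lemma norm_smul_eθ {r : ℝ} (hr : 0 ≤ r) (θ : ℝ) : ‖r • eθ θ‖ = r := by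
  rw [norm_smul, norm_eθ, Real.norm_eq_abs, abs_of_nonneg hr, mul_one]

lemma smul_eθ_ne_zero {r : ℝ} (hr : 0 < r) (θ : ℝ) : r • eθ θ ≠ 0 := by
  intro h
  have := norm_smul_eθ hr.le θ
  rw [h, norm_zero] at this
  exact hr.ne this

section main
variable {v : EuclideanSpace ℝ (Fin 2) → ℝ} {L R' : ℝ}

lemma fderiv_contOn (hv1 : ContDiffOn ℝ 1 v ({(0 : EuclideanSpace ℝ (Fin 2))}ᶜ)) :
    ContinuousOn (fderiv ℝ v) ({(0 : EuclideanSpace ℝ (Fin 2))}ᶜ) := by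
  exact hv1.continuousOn_fderiv_of_isOpen isOpen_compl_singleton le_rfl

lemma hasDeriv_ray (hv1 : ContDiffOn ℝ 1 v ({(0 : EuclideanSpace ℝ (Fin 2))}ᶜ))
    (θ : ℝ) {s : ℝ} (hs : 0 < s) :
    HasDerivAt (fun t => v (t • eθ θ)) ((fderiv ℝ v (s • eθ θ)) (eθ θ)) s := by
  have hne : s • eθ θ ∈ ({(0 : EuclideanSpace ℝ (Fin 2))}ᶜ : Set _) := smul_eθ_ne_zero hs θ
  have hdiff : DifferentiableAt ℝ v (s • eθ θ) :=
    (hv1.differentiableOn one_ne_zero).differentiableAt (isOpen_compl_singleton.mem_nhds hne)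
  have hc : HasDerivAt (fun t : ℝ => t • eθ θ) (eθ θ) s := by
    simpa using (hasDerivAt_id s).smul_const (eθ θ)
  exact hdiff.hasFDerivAt.comp_hasDerivAt s hc

lemma pointwise_bound (hL : 0 < L) (hLR : L < R')
    (hv1 : ContDiffOn ℝ 1 v ({(0 : EuclideanSpace ℝ (Fin 2))}ᶜ))
    (hv0 : ∀ x : EuclideanSpace ℝ (Fin 2), R' ≤ ‖x‖ → v x = 0)
    (θ : ℝ) {r : ℝ} (hr : r ∈ Icc L R') :
    |v (r • eθ θ)| ≤ Real.sqrt (∫ s in L..R', ‖fderiv ℝ v (s • eθ θ)‖ ^ 2 * s) *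
      Real.sqrt (Real.log (R' / r)) := by
  have hR' : 0 < R' := hL.trans hLR
  have hr0 : 0 < r := hL.trans_le hr.1
  have hgc : ContinuousOn (fun s => ‖fderiv ℝ v (s • eθ θ)‖) (Ioi (0:ℝ)) := by
    apply ContinuousOn.norm
    apply (fderiv_contOn hv1).comp
    · exact (continuousOn_id.smul continuousOn_const)
    · exact fun s hs => smul_eθ_ne_zero hs θ
  have hIcc_sub : ∀ {a : ℝ}, 0 < a → Icc a R' ⊆ Ioi (0:ℝ) := fun ha x hx => ha.trans_le hx.1
  -- FTC
  have hftc : ∫ s in r..R', (fderiv ℝ v (s • eθ θ)) (eθ θ) = v (R' • eθ θ) - v (r • eθ θ) := by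
    apply integral_eq_sub_of_hasDerivAt
    · intro x hx
      rw [uIcc_of_le hr.2] at hx
      exact hasDeriv_ray hv1 θ (hr0.trans_le hx.1)
    · apply ContinuousOn.intervalIntegrable
      rw [uIcc_of_le hr.2]
      exact ((fderiv_contOn hv1).comp (continuousOn_id.smul (continuousOn_const (c := eθ θ)))
        (fun s hs => show s • eθ θ ∈ ({0}ᶜ : Set (EuclideanSpace ℝ (Fin 2))) from
          smul_eθ_ne_zero (hr0.trans_le hs.1) θ)).clm_apply continuousOn_const
  have hvR : v (R' • eθ θ) = 0 := hv0 _ (le_of_eq (norm_smul_eθ hR'.le θ).symm)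
  have h1 : |v (r • eθ θ)| ≤ ∫ s in r..R', ‖fderiv ℝ v (s • eθ θ)‖ := by
    have : |v (r • eθ θ)| = |∫ s in r..R', (fderiv ℝ v (s • eθ θ)) (eθ θ)| := by
      rw [hftc, hvR, zero_sub, abs_neg]
    rw [this]
    calc |∫ s in r..R', (fderiv ℝ v (s • eθ θ)) (eθ θ)|
        ≤ ∫ s in r..R', |(fderiv ℝ v (s • eθ θ)) (eθ θ)| :=
          abs_integral_le_integral_abs hr.2
      _ ≤ ∫ s in r..R', ‖fderiv ℝ v (s • eθ θ)‖ := by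
          apply integral_mono_on hr.2
          · apply ContinuousOn.intervalIntegrable
            rw [uIcc_of_le hr.2]
            exact (((fderiv_contOn hv1).comp (continuousOn_id.smul (continuousOn_const (c := eθ θ)))
              (fun s hs => show s • eθ θ ∈ ({0}ᶜ : Set (EuclideanSpace ℝ (Fin 2))) from
                smul_eθ_ne_zero (hr0.trans_le hs.1) θ)).clm_apply
              continuousOn_const).abs
          · apply ContinuousOn.intervalIntegrable
            rw [uIcc_of_le hr.2]
            exact hgc.mono (hIcc_sub hr0)
          · intro s _
            calc |(fderiv ℝ v (s • eθ θ)) (eθ θ)| = ‖(fderiv ℝ v (s • eθ θ)) (eθ θ)‖ := rfl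
              _ ≤ ‖fderiv ℝ v (s • eθ θ)‖ * ‖eθ θ‖ := ContinuousLinearMap.le_opNorm _ _
              _ = ‖fderiv ℝ v (s • eθ θ)‖ := by rw [norm_eθ, mul_one]
  have h2 := interval_cs hr0 hr.2 (hgc.mono (hIcc_sub hr0))
    (fun s _ => norm_nonneg _)
  have h3 : ∫ s in r..R', ‖fderiv ℝ v (s • eθ θ)‖ ^ 2 * s
      ≤ ∫ s in L..R', ‖fderiv ℝ v (s • eθ θ)‖ ^ 2 * s := by
    apply integral_mono_interval hr.1 hr.2 le_rfl
    · apply (ae_restrict_iff' measurableSet_Ioc).2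
      exact Filter.Eventually.of_forall fun s hs =>
        mul_nonneg (sq_nonneg _) ((hL.trans hs.1).le)
    · apply ContinuousOn.intervalIntegrable
      rw [uIcc_of_le hLR.le]
      exact ((hgc.mono (hIcc_sub hL)).pow 2).mul continuousOn_id
  calc |v (r • eθ θ)| ≤ ∫ s in r..R', ‖fderiv ℝ v (s • eθ θ)‖ := h1
    _ ≤ Real.sqrt (∫ s in r..R', ‖fderiv ℝ v (s • eθ θ)‖ ^ 2 * s) *
        Real.sqrt (Real.log (R' / r)) := h2
    _ ≤ Real.sqrt (∫ s in L..R', ‖fderiv ℝ v (s • eθ θ)‖ ^ 2 * s) *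
        Real.sqrt (Real.log (R' / r)) := by
        exact mul_le_mul_of_nonneg_right (Real.sqrt_le_sqrt h3) (Real.sqrt_nonneg _)

end main


lemma continuous_eθ : Continuous eθ := by
  have h : (sigma2.symm : ℝ × ℝ → EuclideanSpace ℝ (Fin 2))
      = fun p => (EuclideanSpace.equiv (Fin 2) ℝ).symm ![p.1, p.2] := rfl
  have : Continuous (sigma2.symm : ℝ × ℝ → EuclideanSpace ℝ (Fin 2)) := by
    rw [h]
    exact (EuclideanSpace.equiv (Fin 2) ℝ).symm.continuous.comp
      (continuous_pi fun i => by
        fin_cases i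
        · exact continuous_fst
        · exact continuous_snd)
  exact this.comp (Real.continuous_cos.prodMk Real.continuous_sin)

lemma sigma2_mp : MeasurePreserving sigma2 volume volume :=
  (EuclideanSpace.volume_preserving_symm_measurableEquiv_toLp (Fin 2)).trans
    (volume_preserving_finTwoArrow ℝ)

lemma smul_eθ (r θ : ℝ) : sigma2.symm (r * Real.cos θ, r * Real.sin θ) = r • eθ θ := by
  ext i; fin_cases i <;> simp [eθ, sigma2_symm_apply]

lemma polarE (g : EuclideanSpace ℝ (Fin 2) → ℝ) :
    ∫ p in polarCoord.target, p.1 • g (p.1 • eθ p.2) = ∫ x, g x := by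
  rw [← (MeasurePreserving.symm _ sigma2_mp).integral_comp sigma2.symm.measurableEmbedding g]
  rw [← integral_comp_polarCoord_symm (fun p => g (sigma2.symm p))]
  refine setIntegral_congr_fun polarCoord.open_target.measurableSet fun p _ => ?_
  rw [polarCoord_symm_apply, smul_eθ]

lemma prod_ae_left {s t : Set ℝ} (h : s =ᵐ[volume] t) (u : Set ℝ) :
    (s ×ˢ u : Set (ℝ × ℝ)) =ᵐ[volume] (t ×ˢ u : Set (ℝ × ℝ)) := by
  have h' := MeasureTheory.ae_eq_set.1 h
  apply MeasureTheory.ae_eq_set.2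
  constructor
  · apply measure_mono_null (show (s ×ˢ u : Set (ℝ × ℝ)) \ (t ×ˢ u) ⊆ (s \ t) ×ˢ u by
      rintro ⟨x, y⟩ ⟨⟨hxs, hyu⟩, hxn⟩
      exact ⟨⟨hxs, fun hxt => hxn ⟨hxt, hyu⟩⟩, hyu⟩)
    rw [Measure.volume_eq_prod, Measure.prod_prod, h'.1, zero_mul]
  · apply measure_mono_null (show (t ×ˢ u : Set (ℝ × ℝ)) \ (s ×ˢ u) ⊆ (t \ s) ×ˢ u by
      rintro ⟨x, y⟩ ⟨⟨hxt, hyu⟩, hxn⟩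
      exact ⟨⟨hxt, fun hxs => hxn ⟨hxs, hyu⟩⟩, hyu⟩)
    rw [Measure.volume_eq_prod, Measure.prod_prod, h'.2, zero_mul]

lemma A_cont {v : EuclideanSpace ℝ (Fin 2) → ℝ} {L R' : ℝ}
    (hv1 : ContDiffOn ℝ 1 v ({(0 : EuclideanSpace ℝ (Fin 2))}ᶜ))
    (hL : 0 < L) (hLR : L ≤ R') :
    Continuous (fun θ => ∫ s in L..R', ‖fderiv ℝ v (s • eθ θ)‖ ^ 2 * s) := by
  have hG : Continuous (Function.uncurry fun (θ s : ℝ) =>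
      ‖fderiv ℝ v ((max s L) • eθ θ)‖ ^ 2 * s) := by
    have hmap : Continuous fun p : ℝ × ℝ => (max p.2 L) • eθ p.1 :=
      (continuous_snd.max continuous_const).smul (continuous_eθ.comp continuous_fst)
    have hfd : Continuous fun p : ℝ × ℝ => fderiv ℝ v ((max p.2 L) • eθ p.1) := by
      apply (fderiv_contOn hv1).comp_continuous hmap
      intro p
      exact smul_eθ_ne_zero (lt_max_of_lt_right hL) _
    exact (hfd.norm.pow 2).mul continuous_snd
  have := intervalIntegral.continuous_parametric_intervalIntegral_of_continuous' (μ := volume) hG L R'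
  apply this.congr
  intro θ
  apply intervalIntegral.integral_congr
  intro s hs
  rw [uIcc_of_le hLR] at hs
  simp only [max_eq_left hs.1]


/-- for `v ∈ C¹(B_{R'} \ {0})` vanishing outside `B_{R'}` in `ℝ²`,
`∫_{B_{R'}\B_L} |v|/r² ≤ C log^{3/2}(R'/L) ‖∇v‖_{L²(ℝ²)}`. -/
theorem radial_log_integral_bound :
    ∃ C : ℝ, 0 < C ∧
      ∀ (L R' : ℝ) (v : EuclideanSpace ℝ (Fin 2) → ℝ),
        0 < L → L < R' →
        Continuous v →
        ContDiffOn ℝ 1 v ({(0 : EuclideanSpace ℝ (Fin 2))}ᶜ) →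
        (∀ x : EuclideanSpace ℝ (Fin 2), R' ≤ ‖x‖ → v x = 0) →
        Integrable (fun x : EuclideanSpace ℝ (Fin 2) => ‖fderiv ℝ v x‖ ^ 2) →
        (∫ x in Metric.ball (0 : EuclideanSpace ℝ (Fin 2)) R' \ Metric.ball 0 L,
            |v x| / ‖x‖ ^ 2)
          ≤ C * (Real.log (R' / L)) ^ ((3 : ℝ) / 2) *
            (∫ x : EuclideanSpace ℝ (Fin 2), ‖fderiv ℝ v x‖ ^ 2) ^ ((1 : ℝ) / 2) := by
  refine ⟨3, by norm_num, ?_⟩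
  intro L R' v hL hLR hv hv1 hv0 hInt
  have hR' : 0 < R' := hL.trans hLR
  set A : ℝ → ℝ := fun θ => ∫ s in L..R', ‖fderiv ℝ v (s • eθ θ)‖ ^ 2 * s with hAdef
  have hAc : Continuous A := A_cont hv1 hL hLR.le
  have hA0 : ∀ θ, 0 ≤ A θ := fun θ => intervalIntegral.integral_nonneg hLR.le
    (fun s hs => mul_nonneg (sq_nonneg _) (hL.trans_le hs.1).le)
  set lg := Real.log (R' / L) with hlgdef
  have hlg : 0 < lg := Real.log_pos ((one_lt_div hL).2 hLR)
  set En := ∫ x : EuclideanSpace ℝ (Fin 2), ‖fderiv ℝ v x‖ ^ 2 with hEndef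
  have hEn0 : 0 ≤ En := integral_nonneg fun x => sq_nonneg _
  set S : Set (ℝ × ℝ) := Ico L R' ×ˢ Ioo (-π) π with hSdef
  have hSm : MeasurableSet S := measurableSet_Ico.prod measurableSet_Ioo
  have hS_target : S ⊆ polarCoord.target := by
    rintro ⟨r, θ⟩ ⟨hr, hθ⟩
    exact ⟨hL.trans_le hr.1, hθ⟩
  have hmapc : Continuous fun p : ℝ × ℝ => p.1 • eθ p.2 :=
    continuous_fst.smul (continuous_eθ.comp continuous_snd)
  have hann_m : MeasurableSet (Metric.ball (0 : EuclideanSpace ℝ (Fin 2)) R' \ Metric.ball 0 L) :=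
    measurableSet_ball.diff measurableSet_ball
  -- generic polar change of variables for the annulus
  have polar_ann : ∀ f : EuclideanSpace ℝ (Fin 2) → ℝ,
      (∫ x in Metric.ball (0 : EuclideanSpace ℝ (Fin 2)) R' \ Metric.ball 0 L, f x)
        = ∫ p in S, p.1 * f (p.1 • eθ p.2) := by
    intro f
    rw [← MeasureTheory.integral_indicator hann_m, ← polarE]
    have hcong : ∀ p ∈ polarCoord.target,
        p.1 • ((Metric.ball (0 : EuclideanSpace ℝ (Fin 2)) R' \ Metric.ball 0 L).indicator f)
            (p.1 • eθ p.2)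
          = S.indicator (fun q : ℝ × ℝ => q.1 * f (q.1 • eθ q.2)) p := by
      rintro ⟨r, θ⟩ ⟨hr, hθ⟩
      have hr0 : (0:ℝ) < r := hr
      have hrn : ‖r • eθ θ‖ = r := norm_smul_eθ hr0.le θ
      have hmem : (r • eθ θ ∈ Metric.ball (0 : EuclideanSpace ℝ (Fin 2)) R' \ Metric.ball 0 L)
          ↔ (r, θ) ∈ S := by
        simp only [Set.mem_diff, mem_ball_zero_iff, hrn, not_lt, hSdef, Set.mem_prod,
          Set.mem_Ico, Set.mem_Ioo]
        constructor
        · rintro ⟨h1, h2⟩; exact ⟨⟨h2, h1⟩, hθ⟩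
        · rintro ⟨⟨h2, h1⟩, _⟩; exact ⟨h1, h2⟩
      simp only [Set.indicator]
      by_cases hin : (r, θ) ∈ S
      · rw [if_pos (hmem.2 hin), if_pos hin, smul_eq_mul]
      · rw [if_neg (fun hc => hin (hmem.1 hc)), if_neg hin, smul_zero]
    rw [setIntegral_congr_fun polarCoord.open_target.measurableSet hcong,
      setIntegral_indicator hSm, Set.inter_eq_self_of_subset_right hS_target]
  -- step 1 : polar coordinates for the LHS
  have step1 : (∫ x in Metric.ball (0 : EuclideanSpace ℝ (Fin 2)) R' \ Metric.ball 0 L,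
      |v x| / ‖x‖ ^ 2) = ∫ p in S, |v (p.1 • eθ p.2)| / p.1 := by
    rw [polar_ann]
    apply setIntegral_congr_fun hSm
    rintro ⟨r, θ⟩ ⟨hr, hθ⟩
    have hr0 : 0 < r := hL.trans_le hr.1
    dsimp only
    rw [norm_smul_eθ hr0.le]
    field_simp
  -- compactness and integrability
  set K : Set (ℝ × ℝ) := Icc L R' ×ˢ Icc (-π) π with hKdef
  have hKc : IsCompact K := isCompact_Icc.prod isCompact_Icc
  have hSK : S ⊆ K := Set.prod_mono Ico_subset_Icc_self Ioo_subset_Icc_self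
  have hK1 : ∀ p ∈ K, p.1 ≠ 0 := fun p hp => (hL.trans_le hp.1.1).ne'
  have hvcomp : Continuous fun p : ℝ × ℝ => v (p.1 • eθ p.2) := hv.comp hmapc
  have hFint : IntegrableOn (fun p : ℝ × ℝ => |v (p.1 • eθ p.2)| / p.1) S := by
    exact ((hvcomp.abs.continuousOn.div continuous_fst.continuousOn hK1).integrableOn_compact
      hKc).mono_set hSK
  have hc2 : ContinuousOn (fun p : ℝ × ℝ => Real.sqrt (Real.log (R' / p.1)) / p.1) K := by
    apply ContinuousOn.div _ continuous_fst.continuousOn hK1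
    apply Real.continuous_sqrt.comp_continuousOn
    apply ContinuousOn.log (continuousOn_const.div continuous_fst.continuousOn hK1)
    exact fun p hp => (div_pos hR' (hL.trans_le hp.1.1)).ne'
  have hsqA : Continuous fun θ => Real.sqrt (A θ) := Real.continuous_sqrt.comp hAc
  have hGint : IntegrableOn
      (fun p : ℝ × ℝ => Real.sqrt (Real.log (R' / p.1)) / p.1 * Real.sqrt (A p.2)) S := by
    exact ((hc2.mul ((hsqA.comp continuous_snd).continuousOn)).integrableOn_compact
      hKc).mono_set hSK
  -- step 2 : pointwise bound
  have step2 : (∫ p in S, |v (p.1 • eθ p.2)| / p.1)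
      ≤ ∫ p in S, Real.sqrt (Real.log (R' / p.1)) / p.1 * Real.sqrt (A p.2) := by
    apply setIntegral_mono_on hFint hGint hSm
    rintro ⟨r, θ⟩ ⟨hr, hθ⟩
    have hr0 : 0 < r := hL.trans_le hr.1
    have hb := pointwise_bound hL hLR hv1 hv0 θ ⟨hr.1, hr.2.le⟩
    have heq : Real.sqrt (Real.log (R' / r)) / r * Real.sqrt (A θ)
        = Real.sqrt (A θ) * Real.sqrt (Real.log (R' / r)) / r := by ring
    rw [heq]
    exact (div_le_div_iff_of_pos_right hr0).2 hb
  -- step 3 : separate variables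
  have step3 : (∫ p in S, Real.sqrt (Real.log (R' / p.1)) / p.1 * Real.sqrt (A p.2))
      = (∫ r in Ico L R', Real.sqrt (Real.log (R' / r)) / r) * ∫ θ in Ioo (-π) π,
          Real.sqrt (A θ) := by
    rw [hSdef, Measure.volume_eq_prod]
    exact setIntegral_prod_mul (fun r => Real.sqrt (Real.log (R' / r)) / r)
      (fun θ => Real.sqrt (A θ)) _ _
  -- step 4 : radial integral
  have step4 : (∫ r in Ico L R', Real.sqrt (Real.log (R' / r)) / r)
      = 2 / 3 * (Real.sqrt lg * lg) := by
    rw [setIntegral_congr_set Ico_ae_eq_Ioc, ← intervalIntegral.integral_of_le hLR.le]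
    exact log_int hL hLR
  have hmIoo : MeasurableSet (Ioo (-π) π : Set ℝ) := measurableSet_Ioo
  -- step 5 : Cauchy-Schwarz in θ
  have step5 : (∫ θ in Ioo (-π) π, Real.sqrt (A θ))
      ≤ Real.sqrt (∫ θ in Ioo (-π) π, A θ) * Real.sqrt (2 * π) := by
    have key := cs_gen (volume.restrict (Ioo (-π) π)) (f := fun θ => Real.sqrt (A θ))
      (g := fun _ => (1:ℝ))
      (Filter.Eventually.of_forall fun θ => Real.sqrt_nonneg _)
      (Filter.Eventually.of_forall fun _ => zero_le_one)
      hsqA.aestronglyMeasurable aestronglyMeasurable_const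
      (((hsqA.pow 2).continuousOn.integrableOn_compact isCompact_Icc).mono_set
        Ioo_subset_Icc_self)
      (by simp only [one_pow]
          exact integrableOn_const measure_Ioo_lt_top.ne)
    simp only [mul_one] at key
    have e1 : (∫ θ in Ioo (-π) π, Real.sqrt (A θ) ^ 2) = ∫ θ in Ioo (-π) π, A θ :=
      setIntegral_congr_fun hmIoo fun θ _ => Real.sq_sqrt (hA0 θ)
    have e2 : (∫ _ in Ioo (-π) π, (1:ℝ) ^ 2) = 2 * π := by
      simp only [one_pow, setIntegral_const, smul_eq_mul, mul_one, Real.volume_Ioo]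
      rw [Real.volume_real_Ioo_of_le (by linarith [Real.pi_pos])]
      ring
    rw [e1, e2] at key
    exact key
  -- energy steps
  set H2 : ℝ × ℝ → ℝ := fun z => ‖fderiv ℝ v (z.1 • eθ z.2)‖ ^ 2 * z.1 with hH2def
  have hH2c : ContinuousOn H2 {z : ℝ × ℝ | 0 < z.1} := by
    apply ContinuousOn.mul _ continuous_fst.continuousOn
    apply ContinuousOn.pow
    apply ContinuousOn.norm
    apply (fderiv_contOn hv1).comp hmapc.continuousOn
    intro z hz
    exact smul_eθ_ne_zero hz _
  have hKpos : K ⊆ {z : ℝ × ℝ | 0 < z.1} := fun z hz => hL.trans_le hz.1.1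
  have hH2K : ContinuousOn H2 K := hH2c.mono hKpos
  have hAset : ∀ θ, A θ = ∫ s in Ioc L R', H2 (s, θ) := fun θ =>
    intervalIntegral.integral_of_le hLR.le
  have hswapint : Integrable (Function.uncurry fun θ s => H2 (s, θ))
      ((volume.restrict (Ioo (-π) π)).prod (volume.restrict (Ioc L R'))) := by
    rw [Measure.prod_restrict, ← Measure.volume_eq_prod]
    have hcsw : ContinuousOn (fun z : ℝ × ℝ => H2 (z.2, z.1)) (Icc (-π) π ×ˢ Icc L R') := by
      apply hH2c.comp (continuous_snd.prodMk continuous_fst).continuousOn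
      intro z hz
      exact hL.trans_le hz.2.1
    exact ((hcsw.integrableOn_compact (isCompact_Icc.prod isCompact_Icc)).mono_set
      (Set.prod_mono Ioo_subset_Icc_self Ioc_subset_Icc_self))
  have hprodint : Integrable (Function.uncurry fun s θ => H2 (s, θ))
      ((volume.restrict (Ioc L R')).prod (volume.restrict (Ioo (-π) π))) := by
    rw [Measure.prod_restrict, ← Measure.volume_eq_prod]
    have huc : (Function.uncurry fun s θ => H2 (s, θ)) = H2 := rfl
    rw [huc]
    exact (hH2K.integrableOn_compact hKc).mono_set
      (Set.prod_mono Ioc_subset_Icc_self Ioo_subset_Icc_self)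
  have step6 : (∫ θ in Ioo (-π) π, A θ)
      = ∫ z in (Ioc L R' ×ˢ Ioo (-π) π : Set (ℝ × ℝ)), H2 z := by
    calc (∫ θ in Ioo (-π) π, A θ)
        = ∫ θ in Ioo (-π) π, ∫ s in Ioc L R', H2 (s, θ) :=
          setIntegral_congr_fun hmIoo fun θ _ => hAset θ
      _ = ∫ s in Ioc L R', ∫ θ in Ioo (-π) π, H2 (s, θ) := integral_integral_swap hswapint
      _ = ∫ z in (Ioc L R' ×ˢ Ioo (-π) π : Set (ℝ × ℝ)), H2 z := by
          have h := integral_integral hprodint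
          rw [Measure.prod_restrict, ← Measure.volume_eq_prod] at h
          exact h
  have step7 : (∫ z in (Ioc L R' ×ˢ Ioo (-π) π : Set (ℝ × ℝ)), H2 z) = ∫ z in S, H2 z :=
    setIntegral_congr_set ((prod_ae_left Ico_ae_eq_Ioc _).symm)
  have step8 : (∫ z in S, H2 z)
      = ∫ x in Metric.ball (0 : EuclideanSpace ℝ (Fin 2)) R' \ Metric.ball 0 L,
          ‖fderiv ℝ v x‖ ^ 2 := by
    rw [polar_ann (fun x => ‖fderiv ℝ v x‖ ^ 2)]
    apply setIntegral_congr_fun hSm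
    rintro ⟨r, θ⟩ _
    simp only [hH2def]
    ring
  have step9 : (∫ x in Metric.ball (0 : EuclideanSpace ℝ (Fin 2)) R' \ Metric.ball 0 L,
      ‖fderiv ℝ v x‖ ^ 2) ≤ En :=
    setIntegral_le_integral hInt (Filter.Eventually.of_forall fun x => sq_nonneg _)
  have henergy : (∫ θ in Ioo (-π) π, A θ) ≤ En := by
    rw [step6, step7, step8]; exact step9
  -- final assembly
  have hJ0 : 0 ≤ 2 / 3 * (Real.sqrt lg * lg) := by positivity
  calc (∫ x in Metric.ball (0 : EuclideanSpace ℝ (Fin 2)) R' \ Metric.ball 0 L,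
      |v x| / ‖x‖ ^ 2)
      = ∫ p in S, |v (p.1 • eθ p.2)| / p.1 := step1
    _ ≤ ∫ p in S, Real.sqrt (Real.log (R' / p.1)) / p.1 * Real.sqrt (A p.2) := step2
    _ = 2 / 3 * (Real.sqrt lg * lg) * ∫ θ in Ioo (-π) π, Real.sqrt (A θ) := by
        rw [step3, step4]
    _ ≤ 2 / 3 * (Real.sqrt lg * lg) * (Real.sqrt (∫ θ in Ioo (-π) π, A θ) * Real.sqrt (2 * π)) :=
        mul_le_mul_of_nonneg_left step5 hJ0
    _ ≤ 2 / 3 * (Real.sqrt lg * lg) * (Real.sqrt En * Real.sqrt (2 * π)) := by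
        apply mul_le_mul_of_nonneg_left _ hJ0
        exact mul_le_mul_of_nonneg_right (Real.sqrt_le_sqrt henergy) (Real.sqrt_nonneg _)
    _ ≤ 3 * lg ^ ((3 : ℝ) / 2) * En ^ ((1 : ℝ) / 2) := by
        rw [show (3:ℝ)/2 = 1/2 + 1 by norm_num, Real.rpow_add hlg, Real.rpow_one,
          ← Real.sqrt_eq_rpow, ← Real.sqrt_eq_rpow]
        have hsq2pi : Real.sqrt (2 * π) ≤ 3 := by
          rw [show (3:ℝ) = Real.sqrt 9 by
            rw [show (9:ℝ) = 3 ^ 2 by norm_num, Real.sqrt_sq (by norm_num : (0:ℝ) ≤ 3)]]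
          exact Real.sqrt_le_sqrt (by nlinarith [Real.pi_le_four])
        have h1 : 0 ≤ Real.sqrt lg := Real.sqrt_nonneg _
        have h2 : 0 ≤ Real.sqrt En := Real.sqrt_nonneg _
        have h3 : 0 ≤ Real.sqrt (2 * π) := Real.sqrt_nonneg _
        nlinarith [mul_nonneg (mul_nonneg h1 hlg.le) h2]
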